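/- Let F be a field of characteristic ≠ 2 and R an associative unital F-algebra (not necessarily simple) with an involution * of the first kind, and assume S ⊊ R. Assume K is not a skew-commutative set, and that there exist x, y ∈ K such that xy + yx is right invertible (there is z ∈ R with (xy + yx)z = 1) and xsy ∈ K² for every s ∈ S. Then K + K² = R. -/

import Mathlib

/-- If `K` is not skew-commutative and there exist `x, y ∈ K` with `xy + yx` right
invertible and `xSy ⊆ K²`, then `K + K² = R` (no simplicity assumed). -/
theorem stmt_17 (F R : Type*) [Field F] [Ring R] [Algebra F R] [StarRing R]
    (hchar : (2 : F) ≠ 0)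
    (hfirst : Set.center R ⊆ {r : R | star r = r})
    (hproper : {r : R | star r = r} ≠ Set.univ)
    (hnsc : ∃ x ∈ {r : R | star r = -r}, ∃ y ∈ {r : R | star r = -r},
      x * y ≠ -(y * x))
    (hxy : ∃ x ∈ {r : R | star r = -r}, ∃ y ∈ {r : R | star r = -r},
      (∃ z : R, (x * y + y * x) * z = 1) ∧
      ∀ s ∈ {r : R | star r = r}, x * s * y ∈
        AddSubgroup.closure {z : R | ∃ a ∈ {r : R | star r = -r},
          ∃ b ∈ {r : R | star r = -r}, z = a * b}) :
    (AddSubgroup.closure ({r : R | star r = -r} ∪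
        {z : R | ∃ a ∈ {r : R | star r = -r}, ∃ b ∈ {r : R | star r = -r}, z = a * b}) :
      Set R) = Set.univ := by
  obtain ⟨x, hx, y, hy, ⟨z, hz⟩, hK2⟩ := hxy
  simp only [Set.mem_setOf_eq] at hx hy
  set Kset : Set R := {r : R | star r = -r} with hKset
  set K2set : Set R := {z : R | ∃ a ∈ Kset, ∃ b ∈ Kset, z = a * b} with hK2set
  set G : AddSubgroup R := AddSubgroup.closure (Kset ∪ K2set) with hG
  -- basic membership helpers
  have memK : ∀ a : R, star a = -a → a ∈ G := fun a ha =>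
    AddSubgroup.subset_closure (Or.inl ha)
  have memK2 : ∀ a b : R, star a = -a → star b = -b → a * b ∈ G := fun a b ha hb =>
    AddSubgroup.subset_closure (Or.inr ⟨a, ha, b, hb, rfl⟩)
  -- star-invariance of closure of K2set
  have hstarcl : ∀ w ∈ AddSubgroup.closure K2set, star w ∈ AddSubgroup.closure K2set := by
    intro w hw
    induction hw using AddSubgroup.closure_induction with
    | mem g hg =>
      obtain ⟨a, ha, b, hb, rfl⟩ := hg
      have : star (a * b) = b * a := by
        rw [star_mul, ha, hb]; noncomm_ring
      rw [this]
      exact AddSubgroup.subset_closure ⟨b, hb, a, ha, rfl⟩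
    | zero => simpa using AddSubgroup.zero_mem _
    | add a b _ _ pa pb => rw [star_add]; exact AddSubgroup.add_mem _ pa pb
    | neg a _ pa => rw [star_neg]; exact AddSubgroup.neg_mem _ pa
  have hmono : AddSubgroup.closure K2set ≤ G :=
    AddSubgroup.closure_mono Set.subset_union_right
  -- key: for all w, 4 * (u * w) ∈ G,  u = x*y + y*x
  have key : ∀ w : R, (algebraMap F R 4) * ((x * y + y * x) * w) ∈ G := by
    intro w
    set σ : R := w + star w with hσdef
    set κ : R := w - star w with hκdef
    have hσ : star σ = σ := by rw [hσdef, star_add, star_star, add_comm]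
    have hκ : star κ = -κ := by rw [hκdef, star_sub, star_star]; noncomm_ring
    -- memberships of pieces
    have hA : x * (y * σ + σ * y) ∈ G := by
      refine memK2 _ _ hx ?_
      rw [star_add, star_mul, star_mul, hσ, hy]; noncomm_ring
    have hB : x * σ * y ∈ G := hmono (hK2 σ hσ)
    have hC : y * (x * σ + σ * x) ∈ G := by
      refine memK2 _ _ hy ?_
      rw [star_add, star_mul, star_mul, hσ, hx]; noncomm_ring
    have hD : y * σ * x ∈ G := by
      have h1 : star (x * σ * y) = y * σ * x := by
        rw [star_mul, star_mul, hσ, hx, hy]; noncomm_ring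
      exact h1 ▸ hmono (hstarcl _ (hK2 σ hσ))
    have he1 : (x * y + y * x) * κ + κ * (x * y + y * x) ∈ G := by
      refine memK _ ?_
      rw [star_add, star_mul, star_mul, star_add, star_mul, star_mul, hκ, hx, hy]
      noncomm_ring
    have hxk : star (x * κ - κ * x) = -(x * κ - κ * x) := by
      rw [star_sub, star_mul, star_mul, hκ, hx]; noncomm_ring
    have hyk : star (y * κ - κ * y) = -(y * κ - κ * y) := by
      rw [star_sub, star_mul, star_mul, hκ, hy]; noncomm_ring
    have he2 : x * (y * κ - κ * y) + (x * κ - κ * x) * y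
        + y * (x * κ - κ * x) + (y * κ - κ * y) * x ∈ G := by
      refine AddSubgroup.add_mem _ (AddSubgroup.add_mem _ (AddSubgroup.add_mem _ ?_ ?_) ?_) ?_
      · exact memK2 _ _ hx hyk
      · exact memK2 _ _ hxk hy
      · exact memK2 _ _ hy hxk
      · exact memK2 _ _ hyk hx
    have hsum : (algebraMap F R 4) * ((x * y + y * x) * w)
        = (x * (y * σ + σ * y) - x * σ * y + (y * (x * σ + σ * x) - y * σ * x))
          + (x * (y * σ + σ * y) - x * σ * y + (y * (x * σ + σ * x) - y * σ * x))
          + ((x * y + y * x) * κ + κ * (x * y + y * x))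
          + (x * (y * κ - κ * y) + (x * κ - κ * x) * y
              + y * (x * κ - κ * x) + (y * κ - κ * y) * x) := by
      rw [hσdef, hκdef, map_ofNat]
      noncomm_ring
    rw [hsum]
    refine AddSubgroup.add_mem _ (AddSubgroup.add_mem _ (AddSubgroup.add_mem _ ?_ ?_) he1) he2
    · exact AddSubgroup.add_mem _ (AddSubgroup.sub_mem _ hA hB) (AddSubgroup.sub_mem _ hC hD)
    · exact AddSubgroup.add_mem _ (AddSubgroup.sub_mem _ hA hB) (AddSubgroup.sub_mem _ hC hD)
  -- multiplying by central symmetric scalar preserves G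
  have hc4c : (algebraMap F R (4⁻¹ : F)) ∈ Set.center R := by
    rw [Set.mem_center_iff]
    exact ⟨fun b => (Algebra.commutes _ b), fun b c => (mul_assoc _ _ _).symm,
      fun b c => (mul_assoc _ _ _)⟩
  have hc4s : star (algebraMap F R (4⁻¹ : F)) = algebraMap F R (4⁻¹ : F) := hfirst hc4c
  have hc4comm : ∀ r : R, (algebraMap F R (4⁻¹ : F)) * r = r * (algebraMap F R (4⁻¹ : F)) :=
    fun r => Algebra.commutes _ r
  have hcmul : ∀ g ∈ G, (algebraMap F R (4⁻¹ : F)) * g ∈ G := by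
    intro g hg
    set c : R := algebraMap F R (4⁻¹ : F) with hc
    induction hg using AddSubgroup.closure_induction with
    | mem g hg =>
      rcases hg with hg | ⟨a, ha, b, hb, rfl⟩
      · refine memK _ ?_
        rw [star_mul, hc4s, hg, hc4comm]; noncomm_ring
      · rw [← mul_assoc]
        refine memK2 _ _ ?_ hb
        rw [star_mul, hc4s, ha, hc4comm]; noncomm_ring
    | zero => simpa using AddSubgroup.zero_mem G
    | add a b _ _ pa pb => rw [mul_add]; exact AddSubgroup.add_mem _ pa pb
    | neg a _ pa => rw [mul_neg]; exact AddSubgroup.neg_mem _ pa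
  -- conclude
  rw [Set.eq_univ_iff_forall]
  intro r
  have hur : (x * y + y * x) * (z * r) = r := by rw [← mul_assoc, hz, one_mul]
  have h4 : (algebraMap F R 4) * r ∈ G := by rw [← hur]; exact key (z * r)
  have hmem := hcmul _ h4
  have h4ne : (4 : F) ≠ 0 := by
    have : (4 : F) = 2 * 2 := by norm_num
    rw [this]; exact mul_ne_zero hchar hchar
  have hred : (algebraMap F R (4⁻¹ : F)) * ((algebraMap F R 4) * r) = r := by
    rw [← mul_assoc, ← map_mul, inv_mul_cancel₀ h4ne, map_one, one_mul]
  rw [hred] at hmem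
  exact hmem
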